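/- Let n ≥ 1 and f_0, f_1 ∈ ℕ with f_0 + f_1 = n, and work in B_n = G(2,n). The subspace of M spanned by {C_v : v ∈ I(2,n), |v| = id, #{i : z_i(v) = 0} = f_0} is invariant under all the operators ϱ(g) for g ∈ B_n, has dimension binomial(n, f_0), and the resulting representation of B_n on it is irreducible. -/

import Mathlib

noncomputable section

/-- The wreath product `G(r,n) = C_r ≀ S_n`, realized as pairs of a color vector
`z : Fin n → ZMod r` and a permutation `p` of `Fin n`. -/
@[ext] structure WreathG (r n : ℕ) where
  z : Fin n → ZMod r
  p : Equiv.Perm (Fin n)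

namespace WreathG

variable {r n : ℕ}

instance : One (WreathG r n) := ⟨⟨0, 1⟩⟩
instance : Mul (WreathG r n) := ⟨fun g h => ⟨g.z + h.z ∘ g.p.symm, g.p * h.p⟩⟩
instance : Inv (WreathG r n) := ⟨fun g => ⟨-(g.z ∘ g.p), g.p⁻¹⟩⟩

@[simp] theorem one_z : (1 : WreathG r n).z = 0 := rfl
@[simp] theorem one_p : (1 : WreathG r n).p = 1 := rfl
@[simp] theorem mul_z (a b : WreathG r n) : (a * b).z = a.z + b.z ∘ a.p.symm := rfl
@[simp] theorem mul_p (a b : WreathG r n) : (a * b).p = a.p * b.p := rfl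
@[simp] theorem inv_z (a : WreathG r n) : (a⁻¹).z = -(a.z ∘ a.p) := rfl
@[simp] theorem inv_p (a : WreathG r n) : (a⁻¹).p = a.p⁻¹ := rfl

instance : Group (WreathG r n) :=
  Group.ofLeftAxioms
    (fun a b c => by
      refine WreathG.ext ?_ (mul_assoc a.p b.p c.p)
      funext x
      show (a.z x + b.z (a.p.symm x)) + c.z ((a.p * b.p).symm x)
          = a.z x + (b.z (a.p.symm x) + c.z (b.p.symm (a.p.symm x)))
      have h : (a.p * b.p).symm x = b.p.symm (a.p.symm x) := rfl
      rw [h, add_assoc])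
    (fun a => by
      refine WreathG.ext ?_ (one_mul a.p)
      funext x
      show 0 + a.z ((1 : Equiv.Perm (Fin n)).symm x) = a.z x
      simp [Equiv.Perm.one_symm])
    (fun a => by
      refine WreathG.ext ?_ (inv_mul_cancel a.p)
      funext x
      show -(a.z (a.p x)) + a.z ((a.p⁻¹).symm x) = 0
      have h : (a.p⁻¹).symm x = a.p x := rfl
      rw [h, neg_add_cancel])

/-- An absolute involution of `G(r,n)`: `|v|² = 1` and `z ∘ |v| = z`. -/
def IsAbsInv (v : WreathG r n) : Prop := v.p ^ 2 = 1 ∧ v.z ∘ v.p = v.z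

instance (v : WreathG r n) : Decidable (IsAbsInv v) :=
  inferInstanceAs (Decidable (_ ∧ _))

/-- Absolute conjugation `τ·(z,σ)·τ⁻¹ = (z ∘ τ⁻¹, τστ⁻¹)`. -/
def aconj (τ : Equiv.Perm (Fin n)) (v : WreathG r n) : WreathG r n :=
  ⟨v.z ∘ τ.symm, τ * v.p * τ⁻¹⟩

theorem IsAbsInv.aconj {v : WreathG r n} (h : IsAbsInv v) (τ : Equiv.Perm (Fin n)) :
    IsAbsInv (WreathG.aconj τ v) := by
  obtain ⟨h1, h2⟩ := h
  constructor
  · show (τ * v.p * τ⁻¹) ^ 2 = 1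
    have key : (τ * v.p * τ⁻¹) * (τ * v.p * τ⁻¹) = τ * (v.p * v.p) * τ⁻¹ := by
      simp [mul_assoc]
    rw [sq, key, ← sq, h1, mul_one, mul_inv_cancel]
  · funext x
    have := congrFun h2 (τ.symm x)
    simpa [WreathG.aconj, Function.comp] using this

/-- `⟨g,v⟩ = ∑ i z_i(g)·z_i(v) ∈ ZMod r`. -/
def pairing (g v : WreathG r n) : ZMod r := ∑ i, g.z i * v.z i

/-- `inv_v(g)`: the number of pairs `i < j` with `|v|(i) = j` and `|g|(i) > |g|(j)`. -/
def invv (v g : WreathG r n) : ℕ :=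
  Nat.card {q : Fin n × Fin n // q.1 < q.2 ∧ v.p q.1 = q.2 ∧ g.p q.2 < g.p q.1}

/-- The number of inversions of a permutation. -/
def invPerm (σ : Equiv.Perm (Fin n)) : ℕ :=
  Nat.card {q : Fin n × Fin n // q.1 < q.2 ∧ σ q.2 < σ q.1}

/-- `fix_i(v)`: the number of `j` with `|v|(j) = j` and `z_j(v) = i`. -/
def fixc (v : WreathG r n) (i : ZMod r) : ℕ :=
  Nat.card {j : Fin n // v.p j = j ∧ v.z j = i}

/-- `pair_i(v)`: the number of pairs `j < k` with `|v|(j) = k` and `z_j(v) = z_k(v) = i`. -/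
def pairc (v : WreathG r n) (i : ZMod r) : ℕ :=
  Nat.card {q : Fin n × Fin n // q.1 < q.2 ∧ v.p q.1 = q.2 ∧ v.z q.1 = i ∧ v.z q.2 = i}

instance : DecidableEq (WreathG r n) := fun a b =>
  decidable_of_iff (a.z = b.z ∧ a.p = b.p)
    (by constructor
        · rintro ⟨h1, h2⟩; exact WreathG.ext h1 h2
        · rintro rfl; exact ⟨rfl, rfl⟩)

instance [NeZero r] : Fintype (WreathG r n) :=
  Fintype.ofEquiv ((Fin n → ZMod r) × Equiv.Perm (Fin n))
    { toFun := fun x => ⟨x.1, x.2⟩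
      invFun := fun g => (g.z, g.p)
      left_inv := fun _ => rfl
      right_inv := fun _ => rfl }

end WreathG

/-- The set `I(r,n)` of absolute involutions, as a subtype. -/
abbrev AbsInv (r n : ℕ) := {v : WreathG r n // WreathG.IsAbsInv v}

/-- The model space `M`: the complex vector space with basis `{C_v : v ∈ I(r,n)}`. -/
abbrev ModelSpace (r n : ℕ) := AbsInv r n →₀ ℂ

/-- `ζ_r = exp(2πi/r)`. -/
def zetaC (r : ℕ) : ℂ := Complex.exp (2 * Real.pi * Complex.I / r)

/-- `ζ_r` raised to an exponent in `ZMod r` (well defined since `ζ_r^r = 1`). -/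
def zetaPow (r : ℕ) (a : ZMod r) : ℂ := zetaC r ^ a.val

/-- The Gelfand model operator `ϱ(g) C_v = ζ_r^{⟨g,v⟩} (−1)^{inv_v(g)} C_{|g|v|g|⁻¹}`. -/
def modelRho {r n : ℕ} (g : WreathG r n) :
    ModelSpace r n →ₗ[ℂ] ModelSpace r n :=
  Finsupp.lsum ℂ fun v =>
    ((zetaPow r (WreathG.pairing g v.1) * (-1 : ℂ) ^ WreathG.invv v.1 g) •
      Finsupp.lsingle (⟨WreathG.aconj g.p v.1, v.2.aconj g.p⟩ : AbsInv r n))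

/-- The auxiliary operator `φ(g) C_v = ζ_r^{⟨g,v⟩} C_{|g|v|g|⁻¹}`. -/
def modelPhi {r n : ℕ} (g : WreathG r n) :
    ModelSpace r n →ₗ[ℂ] ModelSpace r n :=
  Finsupp.lsum ℂ fun v =>
    ((zetaPow r (WreathG.pairing g v.1)) •
      Finsupp.lsingle (⟨WreathG.aconj g.p v.1, v.2.aconj g.p⟩ : AbsInv r n))

/-- `(−1)` raised to an exponent in `ZMod 2`. -/
def negOnePow2 (a : ZMod 2) : ℂ := (-1 : ℂ) ^ a.val

/-- The Gelfand model operator for `B_n = G(2,n)`: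
`ϱ(g) C_v = (−1)^{⟨g,v⟩} (−1)^{inv_v(g)} C_{|g|v|g|⁻¹}`. -/
def modelRho2 {n : ℕ} (g : WreathG 2 n) : ModelSpace 2 n →ₗ[ℂ] ModelSpace 2 n :=
  Finsupp.lsum ℂ fun v =>
    ((negOnePow2 (WreathG.pairing g v.1) * (-1 : ℂ) ^ WreathG.invv v.1 g) •
      Finsupp.lsingle (⟨WreathG.aconj g.p v.1, v.2.aconj g.p⟩ : AbsInv 2 n))

/-- The auxiliary operator for `B_n = G(2,n)`: `φ(g) C_v = (−1)^{⟨g,v⟩} C_{|g|v|g|⁻¹}`. -/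
def modelPhi2 {n : ℕ} (g : WreathG 2 n) : ModelSpace 2 n →ₗ[ℂ] ModelSpace 2 n :=
  Finsupp.lsum ℂ fun v =>
    ((negOnePow2 (WreathG.pairing g v.1)) •
      Finsupp.lsingle (⟨WreathG.aconj g.p v.1, v.2.aconj g.p⟩ : AbsInv 2 n))


namespace GelfandAux

open WreathG Finsupp Finset

variable {n : ℕ}

lemma zmod2_cases : ∀ a : ZMod 2, a = 0 ∨ a = 1 := by decide

@[simp] lemma negOnePow2_zero : negOnePow2 0 = 1 := by
  simp [negOnePow2]

@[simp] lemma negOnePow2_one : negOnePow2 1 = -1 := by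
  simp [negOnePow2, ZMod.val_one]

lemma negOnePow2_add (a b : ZMod 2) :
    negOnePow2 (a + b) = negOnePow2 a * negOnePow2 b := by
  have h11 : (1 : ZMod 2) + 1 = 0 := by decide
  rcases zmod2_cases a with ha | ha <;> rcases zmod2_cases b with hb | hb <;>
    subst ha <;> subst hb <;> simp [h11]

lemma zmod2_add_eq_zero : ∀ a b : ZMod 2, (a + b = 0 ↔ a = b) := by decide

/-- Character orthogonality for `(ZMod 2)^n`. -/
lemma orth (w : Fin n → ZMod 2) :
    ∑ ε : Fin n → ZMod 2, negOnePow2 (∑ i, ε i * w i)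
      = if w = 0 then (2 : ℂ) ^ n else 0 := by
  by_cases hw : w = 0
  · subst hw
    simp [Finset.card_univ]
  · rw [if_neg hw]
    obtain ⟨i₀, hi₀⟩ : ∃ i, w i ≠ 0 := by
      by_contra h
      push_neg at h
      exact hw (funext fun i => h i)
    have hw1 : w i₀ = 1 := (zmod2_cases (w i₀)).resolve_left hi₀
    set S : ℂ := ∑ ε : Fin n → ZMod 2, negOnePow2 (∑ i, ε i * w i) with hS
    have key : S = -S := by
      have hcomp := Equiv.sum_comp (Equiv.addLeft ((Pi.single i₀ (1 : ZMod 2) : Fin n → ZMod 2)))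
        (fun ε : Fin n → ZMod 2 => negOnePow2 (∑ i, ε i * w i))
      rw [hS]
      conv_lhs => rw [← hcomp]
      rw [show -(∑ ε : Fin n → ZMod 2, negOnePow2 (∑ i, ε i * w i))
          = ∑ ε : Fin n → ZMod 2, -(negOnePow2 (∑ i, ε i * w i)) by
        rw [Finset.sum_neg_distrib]]
      apply Finset.sum_congr rfl
      intro ε _
      show negOnePow2 (∑ i, ((Pi.single i₀ (1 : ZMod 2) : Fin n → ZMod 2) + ε) i * w i)
          = -(negOnePow2 (∑ i, ε i * w i))
      have hsum : ∑ i, ((Pi.single i₀ (1 : ZMod 2) : Fin n → ZMod 2) + ε) i * w i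
          = 1 + ∑ i, ε i * w i := by
        have h1 : ∑ i, ((Pi.single i₀ (1 : ZMod 2) : Fin n → ZMod 2)) i * w i = 1 := by
          rw [Finset.sum_eq_single i₀]
          · simp [hw1]
          · intro b _ hb; simp [Pi.single_eq_of_ne hb]
          · simp
        calc ∑ i, ((Pi.single i₀ (1 : ZMod 2) : Fin n → ZMod 2) + ε) i * w i
            = ∑ i, (((Pi.single i₀ (1 : ZMod 2) : Fin n → ZMod 2)) i * w i + ε i * w i) := by
              apply Finset.sum_congr rfl; intro i _; simp [add_mul]
          _ = 1 + ∑ i, ε i * w i := by rw [Finset.sum_add_distrib, h1]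
      rw [hsum, negOnePow2_add, negOnePow2_one]
      ring
    have h2 : (2 : ℂ) * S = 0 := by linear_combination key
    rcases mul_eq_zero.mp h2 with h | h
    · norm_num at h
    · exact h

lemma invv_eq_zero_of_gp_one (v g : WreathG 2 n) (hg : g.p = 1) :
    WreathG.invv v g = 0 := by
  have : IsEmpty {q : Fin n × Fin n // q.1 < q.2 ∧ v.p q.1 = q.2 ∧ g.p q.2 < g.p q.1} := by
    constructor
    rintro ⟨⟨i, j⟩, h1, _, h3⟩
    rw [hg] at h3
    simp only [Equiv.Perm.coe_one, id_eq] at h3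
    exact absurd h1 (not_lt.mpr h3.le)
  exact Nat.card_of_isEmpty

lemma invv_eq_zero_of_vp_one (v g : WreathG 2 n) (hv : v.p = 1) :
    WreathG.invv v g = 0 := by
  have : IsEmpty {q : Fin n × Fin n // q.1 < q.2 ∧ v.p q.1 = q.2 ∧ g.p q.2 < g.p q.1} := by
    constructor
    rintro ⟨⟨i, j⟩, h1, h2, _⟩
    rw [hv] at h2
    simp only [Equiv.Perm.coe_one, id_eq] at h2
    exact lt_irrefl _ (h2 ▸ h1)
  exact Nat.card_of_isEmpty

lemma rho_single (g : WreathG 2 n) (v : AbsInv 2 n) (hv : WreathG.invv v.1 g = 0) :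
    modelRho2 g (Finsupp.single v 1) =
      negOnePow2 (WreathG.pairing g v.1) •
        Finsupp.single (⟨WreathG.aconj g.p v.1, v.2.aconj g.p⟩ : AbsInv 2 n) 1 := by
  rw [modelRho2, Finsupp.lsum_single, hv]
  simp

lemma aconj_one (v : WreathG 2 n) : WreathG.aconj 1 v = v := by
  refine WreathG.ext ?_ ?_
  · funext i; rfl
  · show 1 * v.p * 1⁻¹ = v.p; group

/-- Diagonal elements act diagonally. -/
lemma rho_diag (ε : Fin n → ZMod 2) (v : AbsInv 2 n) :
    modelRho2 (⟨ε, 1⟩ : WreathG 2 n) (Finsupp.single v 1) =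
      negOnePow2 (∑ i, ε i * v.1.z i) • Finsupp.single v 1 := by
  rw [rho_single _ _ (invv_eq_zero_of_gp_one _ _ rfl)]
  have hidx : (⟨WreathG.aconj (⟨ε, 1⟩ : WreathG 2 n).p v.1,
      v.2.aconj (⟨ε, 1⟩ : WreathG 2 n).p⟩ : AbsInv 2 n) = v :=
    Subtype.ext (aconj_one v.1)
  rw [hidx]
  rfl


/-- The diagonal absolute involution with colors `z`. -/
def vOf (z : Fin n → ZMod 2) : AbsInv 2 n :=
  ⟨⟨z, 1⟩, by
    constructor
    · exact one_pow 2
    · funext i; simp⟩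

@[simp] lemma vOf_z (z : Fin n → ZMod 2) : (vOf z).1.z = z := rfl
@[simp] lemma vOf_p (z : Fin n → ZMod 2) : (vOf z).1.p = 1 := rfl

lemma indicator_filter (s : Finset (Fin n)) :
    (univ.filter fun i => (if i ∈ s then (0 : ZMod 2) else 1) = 0) = s := by
  ext i
  by_cases h : i ∈ s <;> simp [h]

lemma card_filter_comp (σ : Equiv.Perm (Fin n)) (z : Fin n → ZMod 2) :
    (univ.filter fun i => z (σ i) = 0).card = (univ.filter fun i => z i = 0).card := by
  apply Finset.card_bij' (fun i _ => σ i) (fun i _ => σ.symm i) <;> intros <;> simp_all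

/-- Functions with a fixed number of zeros correspond to finsets of that size. -/
def zsetEquiv (n f₀ : ℕ) :
    {z : Fin n → ZMod 2 // (univ.filter fun i => z i = 0).card = f₀}
      ≃ {s : Finset (Fin n) // s.card = f₀} where
  toFun z := ⟨univ.filter fun i => z.1 i = 0, z.2⟩
  invFun s := ⟨fun i => if i ∈ s.1 then 0 else 1, by rw [indicator_filter]; exact s.2⟩
  left_inv z := by
    apply Subtype.ext
    funext i
    by_cases h : z.1 i = 0
    · simp [h]
    · rcases zmod2_cases (z.1 i) with h' | h'
      · exact absurd h' h
      · simp [h, h']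
  right_inv s := Subtype.ext (indicator_filter s.1)

lemma exists_perm (z₀ z₁ : Fin n → ZMod 2)
    (h : (univ.filter fun i => z₀ i = 0).card = (univ.filter fun i => z₁ i = 0).card) :
    ∃ τ : Equiv.Perm (Fin n), ∀ i, z₀ (τ i) = z₁ i := by
  classical
  set s₀ : Finset (Fin n) := univ.filter fun i => z₀ i = 0 with hs₀
  set s₁ : Finset (Fin n) := univ.filter fun i => z₁ i = 0 with hs₁
  have e₀ : {x // x ∈ s₁} ≃ {x // x ∈ s₀} := Finset.equivOfCardEq h.symm
  have eC : {x // x ∈ s₁ᶜ} ≃ {x // x ∈ s₀ᶜ} := Finset.equivOfCardEq (by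
    rw [Finset.card_compl, Finset.card_compl, h])
  have e₁ : {x // ¬ x ∈ s₁} ≃ {x // ¬ x ∈ s₀} :=
    ((Equiv.subtypeEquivRight fun x => (Finset.mem_compl (s := s₁) (a := x)).symm).trans
      eC).trans (Equiv.subtypeEquivRight fun x => Finset.mem_compl)
  refine ⟨(Equiv.sumCompl (· ∈ s₁)).symm.trans ((e₀.sumCongr e₁).trans
    (Equiv.sumCompl (· ∈ s₀))), fun i => ?_⟩
  by_cases hi : i ∈ s₁
  · have h1 : (Equiv.sumCompl (· ∈ s₁)).symm i = Sum.inl ⟨i, hi⟩ :=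
      Equiv.sumCompl_symm_apply_of_pos hi
    have hτ : ((Equiv.sumCompl (· ∈ s₁)).symm.trans ((e₀.sumCongr e₁).trans
        (Equiv.sumCompl (· ∈ s₀)))) i = (e₀ ⟨i, hi⟩ : Fin n) := by
      simp [Equiv.trans_apply, h1]
    rw [hτ]
    have h₀ : ((e₀ ⟨i, hi⟩ : Fin n)) ∈ s₀ := (e₀ ⟨i, hi⟩).2
    have h₀' := (Finset.mem_filter.mp h₀).2
    have hi' := (Finset.mem_filter.mp hi).2
    rw [h₀', hi']
  · have h1 : (Equiv.sumCompl (· ∈ s₁)).symm i = Sum.inr ⟨i, hi⟩ :=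
      Equiv.sumCompl_symm_apply_of_neg hi
    have hτ : ((Equiv.sumCompl (· ∈ s₁)).symm.trans ((e₀.sumCongr e₁).trans
        (Equiv.sumCompl (· ∈ s₀)))) i = (e₁ ⟨i, hi⟩ : Fin n) := by
      simp [Equiv.trans_apply, h1]
    rw [hτ]
    have h₀ : ¬ ((e₁ ⟨i, hi⟩ : Fin n)) ∈ s₀ := (e₁ ⟨i, hi⟩).2
    have h₀' : ¬ z₀ ((e₁ ⟨i, hi⟩ : Fin n)) = 0 := fun hz =>
      h₀ (Finset.mem_filter.mpr ⟨Finset.mem_univ _, hz⟩)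
    have hi' : ¬ z₁ i = 0 := fun hz => hi (Finset.mem_filter.mpr ⟨Finset.mem_univ _, hz⟩)
    rcases zmod2_cases (z₀ ((e₁ ⟨i, hi⟩ : Fin n))) with h' | h'
    · exact absurd h' h₀'
    · rcases zmod2_cases (z₁ i) with h'' | h''
      · exact absurd h'' hi'
      · rw [h', h'']


/-- The generating set of the subspace `W`. -/
def Sgen (n f₀ : ℕ) : Set (ModelSpace 2 n) :=
  {x | ∃ v : AbsInv 2 n, v.1.p = 1 ∧
    (Finset.univ.filter fun i => v.1.z i = 0).card = f₀ ∧ x = Finsupp.single v 1}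

lemma gen_mapsto (f₀ : ℕ) (g : WreathG 2 n) (v : AbsInv 2 n) (h1 : v.1.p = 1)
    (h2 : (Finset.univ.filter fun i => v.1.z i = 0).card = f₀) :
    modelRho2 g (Finsupp.single v 1) ∈ Submodule.span ℂ (Sgen n f₀) := by
  rw [rho_single _ _ (invv_eq_zero_of_vp_one _ _ h1)]
  apply Submodule.smul_mem
  apply Submodule.subset_span
  refine ⟨⟨WreathG.aconj g.p v.1, v.2.aconj g.p⟩, ?_, ?_, rfl⟩
  · show g.p * v.1.p * g.p⁻¹ = 1
    rw [h1, mul_one, mul_inv_cancel]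
  · show (Finset.univ.filter fun i => v.1.z (g.p.symm i) = 0).card = f₀
    rw [card_filter_comp g.p.symm v.1.z]
    exact h2

lemma span_invariant (f₀ : ℕ) (g : WreathG 2 n) (x : ModelSpace 2 n)
    (hx : x ∈ Submodule.span ℂ (Sgen n f₀)) :
    modelRho2 g x ∈ Submodule.span ℂ (Sgen n f₀) := by
  induction hx using Submodule.span_induction with
  | mem x h =>
    obtain ⟨v, h1, h2, rfl⟩ := h
    exact gen_mapsto f₀ g v h1 h2
  | zero => rw [map_zero]; exact Submodule.zero_mem _
  | add a b _ _ ha hb => rw [map_add]; exact Submodule.add_mem _ ha hb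
  | smul c a _ ha => rw [map_smul]; exact Submodule.smul_mem _ _ ha


/-- The index type of the natural basis of `W`. -/
abbrev Tset (n f₀ : ℕ) := {v : AbsInv 2 n // v.1.p = 1 ∧
  (Finset.univ.filter fun i => v.1.z i = 0).card = f₀}

lemma sgen_eq_range (n f₀ : ℕ) :
    Sgen n f₀ = Set.range (fun t : Tset n f₀ => Finsupp.single t.1 (1 : ℂ)) := by
  ext x
  constructor
  · rintro ⟨v, h1, h2, rfl⟩; exact ⟨⟨v, h1, h2⟩, rfl⟩
  · rintro ⟨t, rfl⟩; exact ⟨t.1, t.2.1, t.2.2, rfl⟩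

/-- `Tset` is equivalent to color vectors with `f₀` zeros. -/
def tsetEquiv (n f₀ : ℕ) :
    Tset n f₀ ≃ {z : Fin n → ZMod 2 // (univ.filter fun i => z i = 0).card = f₀} where
  toFun t := ⟨t.1.1.z, t.2.2⟩
  invFun z := ⟨vOf z.1, rfl, z.2⟩
  left_inv t := by
    apply Subtype.ext
    apply Subtype.ext
    exact WreathG.ext rfl t.2.1.symm
  right_inv z := rfl

lemma card_Tset (n f₀ : ℕ) : Fintype.card (Tset n f₀) = n.choose f₀ := by
  rw [Fintype.card_congr ((tsetEquiv n f₀).trans (zsetEquiv n f₀))]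
  rw [Fintype.card_finset_len, Fintype.card_fin]

lemma li_single (n f₀ : ℕ) :
    LinearIndependent ℂ (fun t : Tset n f₀ => Finsupp.single t.1 (1 : ℂ)) := by
  have h := (Finsupp.basisSingleOne (R := ℂ) (ι := AbsInv 2 n)).linearIndependent
  have := h.comp (Subtype.val : Tset n f₀ → AbsInv 2 n) Subtype.val_injective
  rwa [show (⇑(Finsupp.basisSingleOne (R := ℂ) (ι := AbsInv 2 n)) ∘
      (Subtype.val : Tset n f₀ → AbsInv 2 n)) = fun t : Tset n f₀ => Finsupp.single t.1 (1 : ℂ)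
    from funext fun t => congrFun Finsupp.coe_basisSingleOne t.1] at this

lemma finrank_span_sgen (n f₀ : ℕ) :
    Module.finrank ℂ (Submodule.span ℂ (Sgen n f₀)) = n.choose f₀ := by
  rw [sgen_eq_range]
  rw [finrank_span_eq_card (li_single n f₀), card_Tset]


lemma extract_basis (n : ℕ) (U : Submodule ℂ (ModelSpace 2 n))
    (hUinv : ∀ g : WreathG 2 n, ∀ x ∈ U, modelRho2 g x ∈ U)
    (x : ModelSpace 2 n) (hxU : x ∈ U)
    (hsupp : ∀ v ∈ x.support, v.1.p = 1)
    (v₀ : AbsInv 2 n) (hv₀ : v₀ ∈ x.support) :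
    Finsupp.single v₀ (1 : ℂ) ∈ U := by
  classical
  have hyU : (∑ ε : Fin n → ZMod 2,
      negOnePow2 (∑ i, ε i * v₀.1.z i) • modelRho2 (⟨ε, 1⟩ : WreathG 2 n) x) ∈ U :=
    Submodule.sum_mem _ fun ε _ =>
      Submodule.smul_mem _ _ (hUinv (⟨ε, 1⟩ : WreathG 2 n) x hxU)
  have hxe : x = ∑ v ∈ x.support, (x v) • Finsupp.single v (1 : ℂ) := by
    conv_lhs => rw [← Finsupp.sum_single x]
    rw [Finsupp.sum]
    refine Finset.sum_congr rfl fun v _ => ?_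
    rw [Finsupp.smul_single', mul_one]
  have step1 : ∀ ε : Fin n → ZMod 2,
      negOnePow2 (∑ i, ε i * v₀.1.z i) • modelRho2 (⟨ε, 1⟩ : WreathG 2 n) x
        = ∑ v ∈ x.support,
            (negOnePow2 (∑ i, ε i * (v₀.1.z i + v.1.z i)) * x v) • Finsupp.single v (1 : ℂ) := by
    intro ε
    conv_lhs => rw [hxe]
    rw [map_sum, Finset.smul_sum]
    refine Finset.sum_congr rfl fun v _ => ?_
    rw [map_smul, rho_diag, smul_smul, smul_smul]
    congr 1
    rw [show (∑ i, ε i * (v₀.1.z i + v.1.z i))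
        = (∑ i, ε i * v₀.1.z i) + ∑ i, ε i * v.1.z i by
      rw [← Finset.sum_add_distrib]
      exact Finset.sum_congr rfl fun i _ => by ring]
    rw [negOnePow2_add]
    ring
  have hy2 : (∑ ε : Fin n → ZMod 2,
      negOnePow2 (∑ i, ε i * v₀.1.z i) • modelRho2 (⟨ε, 1⟩ : WreathG 2 n) x)
        = ((2 : ℂ) ^ n * x v₀) • Finsupp.single v₀ (1 : ℂ) := by
    calc (∑ ε : Fin n → ZMod 2,
        negOnePow2 (∑ i, ε i * v₀.1.z i) • modelRho2 (⟨ε, 1⟩ : WreathG 2 n) x)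
        = ∑ ε : Fin n → ZMod 2, ∑ v ∈ x.support,
            (negOnePow2 (∑ i, ε i * (v₀.1.z i + v.1.z i)) * x v) • Finsupp.single v (1 : ℂ) :=
          Finset.sum_congr rfl fun ε _ => step1 ε
      _ = ∑ v ∈ x.support, ∑ ε : Fin n → ZMod 2,
            (negOnePow2 (∑ i, ε i * (v₀.1.z i + v.1.z i)) * x v) • Finsupp.single v (1 : ℂ) :=
          Finset.sum_comm
      _ = ∑ v ∈ x.support,
            (((if (fun i => v₀.1.z i + v.1.z i) = (0 : Fin n → ZMod 2) then (2 : ℂ) ^ n else 0))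
              * x v) • Finsupp.single v (1 : ℂ) := by
          refine Finset.sum_congr rfl fun v _ => ?_
          rw [← Finset.sum_smul, ← Finset.sum_mul, orth (fun i => v₀.1.z i + v.1.z i)]
      _ = ((2 : ℂ) ^ n * x v₀) • Finsupp.single v₀ (1 : ℂ) := by
          rw [Finset.sum_eq_single v₀]
          · have hcond : (fun i => (v₀.1).z i + (v₀.1).z i) = (0 : Fin n → ZMod 2) :=
              funext fun i => (zmod2_add_eq_zero ((v₀.1).z i) ((v₀.1).z i)).mpr rfl
            rw [if_pos hcond]
          · intro v hv hne
            rw [if_neg, zero_mul, zero_smul]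
            intro hzeq
            apply hne
            apply Subtype.ext
            refine WreathG.ext ?_ ?_
            · funext i
              exact ((zmod2_add_eq_zero _ _).mp (congrFun hzeq i)).symm
            · rw [hsupp v hv, hsupp v₀ hv₀]
          · intro h
            exact absurd hv₀ h
  have hc : (2 : ℂ) ^ n * x v₀ ≠ 0 :=
    mul_ne_zero (pow_ne_zero _ two_ne_zero) (Finsupp.mem_support_iff.mp hv₀)
  have heq : Finsupp.single v₀ (1 : ℂ)
      = ((2 : ℂ) ^ n * x v₀)⁻¹ • (∑ ε : Fin n → ZMod 2,
          negOnePow2 (∑ i, ε i * v₀.1.z i) • modelRho2 (⟨ε, 1⟩ : WreathG 2 n) x) := by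
    rw [hy2, smul_smul, inv_mul_cancel₀ hc, one_smul]
  rw [heq]
  exact Submodule.smul_mem _ _ hyU

end GelfandAux





/-- The span of the basis vectors `C_v` with `|v| = id` and exactly `f₀`
zero-colored entries is a `ϱ`-invariant subspace of `M` of dimension `binomial(n, f₀)`,
and the resulting representation of `B_n` on it is irreducible. -/
theorem span_diagonal_class_irreducible (n f₀ f₁ : ℕ) (hn : 1 ≤ n) (hf : f₀ + f₁ = n) :
    ∀ W : Submodule ℂ (ModelSpace 2 n),
      W = Submodule.span ℂ
          {x | ∃ v : AbsInv 2 n, v.1.p = 1 ∧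
            (Finset.univ.filter fun i => v.1.z i = 0).card = f₀ ∧
            x = Finsupp.single v 1} →
      (∀ g : WreathG 2 n, ∀ x ∈ W, modelRho2 g x ∈ W) ∧
      Module.finrank ℂ W = Nat.choose n f₀ ∧
      W ≠ ⊥ ∧
      (∀ U : Submodule ℂ (ModelSpace 2 n), U ≤ W →
        (∀ g : WreathG 2 n, ∀ x ∈ U, modelRho2 g x ∈ U) → U = ⊥ ∨ U = W) := by
  intro W hW
  have hW' : W = Submodule.span ℂ (GelfandAux.Sgen n f₀) := hW
  refine ⟨?_, ?_, ?_, ?_⟩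
  · intro g x hx
    rw [hW'] at hx ⊢
    exact GelfandAux.span_invariant f₀ g x hx
  · rw [hW']
    exact GelfandAux.finrank_span_sgen n f₀
  · intro hbot
    have hf₀ : f₀ ≤ n := by omega
    obtain ⟨s, -, hs⟩ := Finset.exists_subset_card_eq
      (s := (Finset.univ : Finset (Fin n))) (n := f₀)
      (by rw [Finset.card_univ, Fintype.card_fin]; exact hf₀)
    have hmem : Finsupp.single
        (GelfandAux.vOf (fun i => if i ∈ s then (0 : ZMod 2) else 1)) (1 : ℂ) ∈ W := by
      rw [hW']
      apply Submodule.subset_span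
      refine ⟨_, rfl, ?_, rfl⟩
      show (Finset.univ.filter fun i => (if i ∈ s then (0 : ZMod 2) else 1) = 0).card = f₀
      rw [GelfandAux.indicator_filter]
      exact hs
    rw [hbot] at hmem
    exact one_ne_zero (Finsupp.single_eq_zero.mp ((Submodule.mem_bot ℂ).mp hmem))
  · intro U hUW hUinv
    by_cases hU : U = ⊥
    · left; exact hU
    right
    obtain ⟨x, hxU, hx0⟩ := (Submodule.ne_bot_iff U).mp hU
    have hxW : x ∈ W := hUW hxU
    have hsupp : ∀ v ∈ x.support, v.1.p = 1 ∧
        (Finset.univ.filter fun i => v.1.z i = 0).card = f₀ := by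
      have hWle : W ≤ Finsupp.supported ℂ ℂ {v : AbsInv 2 n | v.1.p = 1 ∧
          (Finset.univ.filter fun i => v.1.z i = 0).card = f₀} := by
        rw [hW']
        apply Submodule.span_le.mpr
        rintro _ ⟨v, h1, h2, rfl⟩
        exact Finsupp.single_mem_supported ℂ 1 ⟨h1, h2⟩
      have hsub := (Finsupp.mem_supported ℂ x).mp (hWle hxW)
      intro v hv
      exact hsub hv
    obtain ⟨v₀, hv₀⟩ := Finsupp.support_nonempty_iff.mpr hx0
    have hbase : Finsupp.single v₀ (1 : ℂ) ∈ U :=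
      GelfandAux.extract_basis n U hUinv x hxU (fun v hv => (hsupp v hv).1) v₀ hv₀
    have hWU : W ≤ U := by
      rw [hW']
      apply Submodule.span_le.mpr
      rintro _ ⟨v₁, h1, h2, rfl⟩
      obtain ⟨τ, hτ⟩ := GelfandAux.exists_perm v₀.1.z v₁.1.z (by rw [(hsupp v₀ hv₀).2, h2])
      have hg := GelfandAux.rho_single (⟨0, τ⁻¹⟩ : WreathG 2 n) v₀
        (GelfandAux.invv_eq_zero_of_vp_one _ _ (hsupp v₀ hv₀).1)
      have hpair : WreathG.pairing (⟨0, τ⁻¹⟩ : WreathG 2 n) v₀.1 = 0 := by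
        simp [WreathG.pairing]
      have hidx : (⟨WreathG.aconj (⟨0, τ⁻¹⟩ : WreathG 2 n).p v₀.1,
          v₀.2.aconj (⟨0, τ⁻¹⟩ : WreathG 2 n).p⟩ : AbsInv 2 n) = v₁ := by
        apply Subtype.ext
        refine WreathG.ext ?_ ?_
        · funext i
          show v₀.1.z ((τ⁻¹ : Equiv.Perm (Fin n)).symm i) = v₁.1.z i
          have hss : (τ⁻¹ : Equiv.Perm (Fin n)).symm i = τ i := rfl
          rw [hss]
          exact hτ i
        · show τ⁻¹ * v₀.1.p * (τ⁻¹)⁻¹ = v₁.1.p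
          rw [(hsupp v₀ hv₀).1, h1, mul_one, mul_inv_cancel]
      rw [hidx, hpair, GelfandAux.negOnePow2_zero, one_smul] at hg
      rw [← hg]
      exact hUinv _ _ hbase
    exact le_antisymm hUW hWU
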